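/- Let a, b, c ∈ ℂ with Re c > Re b > 0, let p > 0 be real and let z < 1 be real. Then the Euler-integral hypergeometric function satisfies F(a,b;c;z) = p^{c−b} · (1−z)^{−a} · F₁(c−b; c−a, a; c; 1−p, (1−p−z)/(1−z)), where F₁ is given by its Euler integral (well defined since Re c > Re(c−b) > 0 and both arguments 1−p and (1−p−z)/(1−z) = 1 − p/(1−z) are real numbers less than 1). -/

import Mathlib

open MeasureTheory Complex Set

noncomputable section

/-- Pochhammer symbol `(a)_k = a (a+1) ⋯ (a+k-1)`. -/
def poch (a : ℂ) (k : ℕ) : ℂ := ∏ i ∈ Finset.range k, (a + i)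

/-- Euler-integral Gauss hypergeometric function `F(a,b;c;w)` for real `w < 1`. -/
def eulerF (a b c : ℂ) (w : ℝ) : ℂ :=
  Complex.Gamma c / (Complex.Gamma b * Complex.Gamma (c - b)) *
    ∫ t in (0:ℝ)..1, (t : ℂ) ^ (b - 1) * ((1 - t : ℝ) : ℂ) ^ (c - b - 1) *
      ((1 - w * t : ℝ) : ℂ) ^ (-a)

/-- Appell's first hypergeometric function `F₁(α;β,β';γ;x,w)` by its Euler integral. -/
def appellF1 (α β β' γ : ℂ) (x w : ℝ) : ℂ :=
  Complex.Gamma γ / (Complex.Gamma α * Complex.Gamma (γ - α)) *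
    ∫ t in (0:ℝ)..1, (t : ℂ) ^ (α - 1) * ((1 - t : ℝ) : ℂ) ^ (γ - α - 1) *
      ((1 - x * t : ℝ) : ℂ) ^ (-β) * ((1 - w * t : ℝ) : ℂ) ^ (-β')

private lemma cpow_exp_aux {x : ℝ} (hx : 0 < x) (w : ℂ) :
    ((x : ℝ) : ℂ) ^ w = Complex.exp (w * (Real.log x : ℂ)) := by
  rw [Complex.cpow_def_of_ne_zero (by exact_mod_cast hx.ne') w, ← Complex.ofReal_log hx.le,
    mul_comm]

private lemma phi_mem {p : ℝ} (hp : 0 < p) {s : ℝ} (hs : s ∈ Ioo (0:ℝ) 1) :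
    (1 - s) / (1 - (1 - p) * s) ∈ Ioo (0:ℝ) 1 := by
  obtain ⟨h0, h1⟩ := hs
  have hd : 0 < 1 - (1 - p) * s := by nlinarith
  constructor
  · exact div_pos (by linarith) hd
  · rw [div_lt_one hd]; nlinarith

private lemma phi_inv {p : ℝ} (hp : 0 < p) {s : ℝ} (hs : s ∈ Ioo (0:ℝ) 1) :
    (1 - (1 - s) / (1 - (1 - p) * s)) /
      (1 - (1 - p) * ((1 - s) / (1 - (1 - p) * s))) = s := by
  obtain ⟨h0, h1⟩ := hs
  have hd : 0 < 1 - (1 - p) * s := by nlinarith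
  have h2 : 1 - (1 - s) / (1 - (1 - p) * s) = p * s / (1 - (1 - p) * s) := by
    simp only [div_eq_mul_inv]; linear_combination -(mul_inv_cancel₀ hd.ne')
  have h3 : 1 - (1 - p) * ((1 - s) / (1 - (1 - p) * s)) = p / (1 - (1 - p) * s) := by
    simp only [div_eq_mul_inv]; linear_combination -(mul_inv_cancel₀ hd.ne')
  rw [h2, h3]
  rw [div_div_div_cancel_right₀]
  · exact mul_div_cancel_left₀ s hp.ne'
  · exact hd.ne'

private lemma phi_deriv {p : ℝ} (hp : 0 < p) {s : ℝ} (hs : s ∈ Ioo (0:ℝ) 1) :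
    HasDerivAt (fun s : ℝ => (1 - s) / (1 - (1 - p) * s))
      (-p / (1 - (1 - p) * s) ^ 2) s := by
  obtain ⟨h0, h1⟩ := hs
  have hd : 0 < 1 - (1 - p) * s := by nlinarith
  have h1' : HasDerivAt (fun s : ℝ => 1 - s) (-1) s := by
    simpa using (hasDerivAt_id s).const_sub 1
  have h2' : HasDerivAt (fun s : ℝ => 1 - (1 - p) * s) (-(1 - p)) s := by
    simpa using ((hasDerivAt_id s).const_mul (1 - p)).const_sub 1
  have h : HasDerivAt (fun s : ℝ => (1 - s) / (1 - (1 - p) * s)) _ s := h1'.div h2' hd.ne'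
  convert h using 1
  ring

theorem Gauss_as_AppellF1_psi_p
    (a b c : ℂ) (hb : 0 < b.re) (hbc : b.re < c.re)
    (p : ℝ) (hp : 0 < p) (z : ℝ) (hz : z < 1) :
    eulerF a b c z =
      ((p : ℝ) : ℂ) ^ (c - b) * ((1 - z : ℝ) : ℂ) ^ (-a) *
      appellF1 (c - b) (c - a) a c (1 - p) ((1 - p - z) / (1 - z)) := by
  have hz1 : (0:ℝ) < 1 - z := by linarith
  set w : ℝ := (1 - p - z) / (1 - z) with hw
  have himg : (fun s : ℝ => (1 - s) / (1 - (1 - p) * s)) '' Ioo 0 1 = Ioo 0 1 := by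
    ext y
    constructor
    · rintro ⟨s, hs, rfl⟩; exact phi_mem hp hs
    · intro hy
      exact ⟨_, phi_mem hp hy, phi_inv hp hy⟩
  have hinj : Set.InjOn (fun s : ℝ => (1 - s) / (1 - (1 - p) * s)) (Ioo 0 1) := by
    intro x hx y hy h
    have hx' := phi_inv hp hx
    have hy' := phi_inv hp hy
    dsimp only at h
    rw [← hx', ← hy', h]
  have hderiv : ∀ s ∈ Ioo (0:ℝ) 1,
      HasDerivWithinAt (fun s : ℝ => (1 - s) / (1 - (1 - p) * s))
        ((fun s : ℝ => -p / (1 - (1 - p) * s) ^ 2) s) (Ioo 0 1) s :=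
    fun s hs => (phi_deriv hp hs).hasDerivWithinAt
  have hcv := integral_image_eq_integral_abs_deriv_smul measurableSet_Ioo hderiv hinj
    (fun t : ℝ => (t : ℂ) ^ (b - 1) * ((1 - t : ℝ) : ℂ) ^ (c - b - 1) *
      ((1 - z * t : ℝ) : ℂ) ^ (-a))
  rw [himg] at hcv
  have key : ∀ s ∈ Ioo (0:ℝ) 1,
      |(fun s : ℝ => -p / (1 - (1 - p) * s) ^ 2) s| •
        ((fun t : ℝ => (t : ℂ) ^ (b - 1) * ((1 - t : ℝ) : ℂ) ^ (c - b - 1) *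
          ((1 - z * t : ℝ) : ℂ) ^ (-a)) ((1 - s) / (1 - (1 - p) * s))) =
      (((p : ℝ) : ℂ) ^ (c - b) * ((1 - z : ℝ) : ℂ) ^ (-a)) *
        ((s : ℂ) ^ (c - b - 1) * ((1 - s : ℝ) : ℂ) ^ (b - 1) *
          ((1 - (1 - p) * s : ℝ) : ℂ) ^ (-(c - a)) * ((1 - w * s : ℝ) : ℂ) ^ (-a)) := by
    rintro s ⟨h0, h1⟩
    dsimp only
    have hd : 0 < 1 - (1 - p) * s := by nlinarith
    have hE : 0 < (1 - s) * (1 - z) + p * s := by nlinarith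
    have hs1 : (0:ℝ) < 1 - s := by linarith
    have ht0 : 0 < (1 - s) / (1 - (1 - p) * s) := div_pos hs1 hd
    have h1t : 1 - (1 - s) / (1 - (1 - p) * s) = p * s / (1 - (1 - p) * s) := by
      simp only [div_eq_mul_inv]; linear_combination -(mul_inv_cancel₀ hd.ne')
    have hzt : 1 - z * ((1 - s) / (1 - (1 - p) * s)) =
        ((1 - s) * (1 - z) + p * s) / (1 - (1 - p) * s) := by
      simp only [div_eq_mul_inv]; linear_combination -(mul_inv_cancel₀ hd.ne')
    have hws : 1 - w * s = ((1 - s) * (1 - z) + p * s) / (1 - z) := by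
      rw [hw]; field_simp; ring
    have habs : |(-p / (1 - (1 - p) * s) ^ 2)| = p / (1 - (1 - p) * s) ^ 2 := by
      rw [abs_div, abs_neg, abs_of_pos hp, abs_of_pos (by positivity)]
    rw [habs, Complex.real_smul, h1t, hzt, hws]
    have hcoe : ((p / (1 - (1 - p) * s) ^ 2 : ℝ) : ℂ) =
        Complex.exp (((Real.log (p / (1 - (1 - p) * s) ^ 2) : ℝ) : ℂ)) := by
      rw [← Real.exp_log (show 0 < p / (1 - (1 - p) * s) ^ 2 by positivity),
        Complex.ofReal_exp, Real.log_exp]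
    rw [hcoe, cpow_exp_aux ht0, cpow_exp_aux (show 0 < p * s / (1 - (1 - p) * s) by positivity),
      cpow_exp_aux (div_pos hE hd), cpow_exp_aux hp, cpow_exp_aux hz1,
      cpow_exp_aux h0, cpow_exp_aux hs1, cpow_exp_aux hd, cpow_exp_aux (div_pos hE hz1)]
    have hL1 : Real.log ((1 - s) / (1 - (1 - p) * s)) =
        Real.log (1 - s) - Real.log (1 - (1 - p) * s) := Real.log_div hs1.ne' hd.ne'
    have hL2 : Real.log (p * s / (1 - (1 - p) * s)) =
        Real.log p + Real.log s - Real.log (1 - (1 - p) * s) := by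
      rw [Real.log_div (by positivity) hd.ne', Real.log_mul hp.ne' h0.ne']
    have hL3 : Real.log (((1 - s) * (1 - z) + p * s) / (1 - (1 - p) * s)) =
        Real.log ((1 - s) * (1 - z) + p * s) - Real.log (1 - (1 - p) * s) :=
      Real.log_div hE.ne' hd.ne'
    have hL4 : Real.log (((1 - s) * (1 - z) + p * s) / (1 - z)) =
        Real.log ((1 - s) * (1 - z) + p * s) - Real.log (1 - z) :=
      Real.log_div hE.ne' hz1.ne'
    have hL5 : Real.log (p / (1 - (1 - p) * s) ^ 2) =
        Real.log p - 2 * Real.log (1 - (1 - p) * s) := by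
      rw [Real.log_div hp.ne' (by positivity), Real.log_pow]
      push_cast; ring
    rw [hL1, hL2, hL3, hL4, hL5]
    simp only [← Complex.exp_add]
    congr 1
    push_cast
    ring
  have hIoo : ∫ s in Ioo (0:ℝ) 1,
        |(fun s : ℝ => -p / (1 - (1 - p) * s) ^ 2) s| •
          ((fun t : ℝ => (t : ℂ) ^ (b - 1) * ((1 - t : ℝ) : ℂ) ^ (c - b - 1) *
            ((1 - z * t : ℝ) : ℂ) ^ (-a)) ((1 - s) / (1 - (1 - p) * s))) =
      ∫ s in Ioo (0:ℝ) 1,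
        (((p : ℝ) : ℂ) ^ (c - b) * ((1 - z : ℝ) : ℂ) ^ (-a)) *
          ((s : ℂ) ^ (c - b - 1) * ((1 - s : ℝ) : ℂ) ^ (b - 1) *
            ((1 - (1 - p) * s : ℝ) : ℂ) ^ (-(c - a)) * ((1 - w * s : ℝ) : ℂ) ^ (-a)) :=
    setIntegral_congr_fun measurableSet_Ioo key
  rw [hIoo, MeasureTheory.integral_const_mul] at hcv
  unfold eulerF appellF1
  rw [sub_sub_cancel]
  rw [intervalIntegral.integral_of_le (by norm_num : (0:ℝ) ≤ 1),
    intervalIntegral.integral_of_le (by norm_num : (0:ℝ) ≤ 1),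
    integral_Ioc_eq_integral_Ioo, integral_Ioc_eq_integral_Ioo, hcv]
  ring
end
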